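/- arXiv:2204.03298 — 2 statements merged into one kernel-verified Lean document; each statement's English description precedes it below -/
import Mathlib

section
/- Let ⟪-,-⟫ be a double (12)-weak Poisson bracket on A associated with the right bimodule structure. Then there is a unique Poisson bracket {-,-}_Sym on the symmetric algebra Sym(A/[A,A]) of the k-vector space A/[A,A] such that {ā,b̄}_Sym = π₂(⟪a,b⟫) for all a,b ∈ A, where ā denotes the class of a in A/[A,A] and π₂ : A⊗A → Sym(A/[A,A]) sends x⊗y to the product of the classes of x and y. -/
open scoped TensorProduct

noncomputable section

/-- A (`k`-linear) `A`-bimodule-type structure on a `k`-module `M`,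
given by a three-slot action `a · d · b`. -/
structure BimodOn (k A M : Type*) [CommSemiring k] [Ring A] [Algebra k A]
    [AddCommMonoid M] [Module k M] where
  act : A → M → A → M
  add_left : ∀ (a a' : A) (d : M) (b : A), act (a + a') d b = act a d b + act a' d b
  add_mid : ∀ (a : A) (d d' : M) (b : A), act a (d + d') b = act a d b + act a d' b
  add_right : ∀ (a : A) (d : M) (b b' : A), act a d (b + b') = act a d b + act a d b'
  smul_left : ∀ (c : k) (a : A) (d : M) (b : A), act (c • a) d b = c • act a d b
  smul_mid : ∀ (c : k) (a : A) (d : M) (b : A), act a (c • d) b = c • act a d b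
  smul_right : ∀ (c : k) (a : A) (d : M) (b : A), act a d (c • b) = c • act a d b
  act_one_one : ∀ d : M, act 1 d 1 = d
  act_mul : ∀ (a a' : A) (d : M) (b b' : A), act a (act a' d b') b = act (a * a') d (b' * b)

/-- An `A`-bimodule structure on `A ⊗[k] A`. -/
abbrev BimodStr (k A : Type*) [CommSemiring k] [Ring A] [Algebra k A] :=
  BimodOn k A (A ⊗[k] A)

section Defs

variable (k A : Type*) [CommSemiring k] [Ring A] [Algebra k A]

/-- The swap automorphism `°` of `A ⊗[k] A`, `a ⊗ b ↦ b ⊗ a`. -/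
def swapT : A ⊗[k] A →ₗ[k] A ⊗[k] A := (TensorProduct.comm k A A).toLinearMap

variable {k A}

namespace BimodOn

/-- The swap bimodule structure `a * d * b = (a · d° · b)°` associated with a
bimodule structure on `A ⊗[k] A`. -/
def star (S : BimodStr k A) (a : A) (d : A ⊗[k] A) (b : A) : A ⊗[k] A :=
  swapT k A (S.act a (swapT k A d) b)

/-- A bimodule structure on `A ⊗[k] A` is swap-commuting if it commutes with its
swap bimodule structure. -/
def SwapCommuting (S : BimodStr k A) : Prop :=
  ∀ (a₁ a₂ b₁ b₂ : A) (d : A ⊗[k] A),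
    S.act a₁ (S.star a₂ d b₂) b₁ = S.star a₂ (S.act a₁ d b₁) b₂

end BimodOn

end Defs

/-- A double bracket on `A` associated with a bimodule structure `S` on `A ⊗[k] A`
(with swap bimodule structure `S.star`). -/
structure DoubleBracket {k A : Type*} [CommSemiring k] [Ring A] [Algebra k A]
    (S : BimodStr k A) where
  br : A →ₗ[k] A →ₗ[k] A ⊗[k] A
  antisymm : ∀ a b : A, br a b = - swapT k A (br b a)
  leibniz_right : ∀ a b c : A, br a (b * c) = S.act b (br a c) 1 + S.act 1 (br a b) c
  leibniz_left : ∀ a b c : A, br (b * c) a = S.star b (br c a) 1 + S.star 1 (br b a) c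

section Taus

variable (k A : Type*) [CommSemiring k] [Ring A] [Algebra k A]

/-- `τ_{(123)}` on `A^{⊗3}`: `a ⊗ b ⊗ c ↦ c ⊗ a ⊗ b`. -/
def tau123 : (A ⊗[k] A) ⊗[k] A →ₗ[k] (A ⊗[k] A) ⊗[k] A :=
  ((TensorProduct.comm k (A ⊗[k] A) A).trans (TensorProduct.assoc k A A A).symm).toLinearMap

/-- `τ_{(132)}` on `A^{⊗3}`: `a ⊗ b ⊗ c ↦ b ⊗ c ⊗ a`. -/
def tau132 : (A ⊗[k] A) ⊗[k] A →ₗ[k] (A ⊗[k] A) ⊗[k] A :=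
  ((TensorProduct.assoc k A A A).trans (TensorProduct.comm k A (A ⊗[k] A))).toLinearMap

/-- `τ_{(12)}` on `A^{⊗3}`: `a ⊗ b ⊗ c ↦ b ⊗ a ⊗ c`. -/
def tau12 : (A ⊗[k] A) ⊗[k] A →ₗ[k] (A ⊗[k] A) ⊗[k] A :=
  (TensorProduct.congr (TensorProduct.comm k A A) (LinearEquiv.refl k A)).toLinearMap

variable {k A}

/-- `⟪a, -⟫_L : A ⊗ A → A ⊗ A ⊗ A`, `b₁ ⊗ b₂ ↦ ⟪a, b₁⟫ ⊗ b₂`. -/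
def trL (br : A →ₗ[k] A →ₗ[k] A ⊗[k] A) (a : A) :
    A ⊗[k] A →ₗ[k] (A ⊗[k] A) ⊗[k] A :=
  TensorProduct.map (br a) LinearMap.id

/-- The double Jacobiator of a bilinear operation `A × A → A ⊗ A`:
`⟪a,b,c⟫ = ⟪a,⟪b,c⟫⟫_L + τ_{(123)} ⟪b,⟪c,a⟫⟫_L + τ_{(132)} ⟪c,⟪a,b⟫⟫_L`. -/
def jac (br : A →ₗ[k] A →ₗ[k] A ⊗[k] A) (a b c : A) : (A ⊗[k] A) ⊗[k] A :=
  trL br a (br b c) + tau123 k A (trL br b (br c a)) + tau132 k A (trL br c (br a b))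

end Taus

end

/-- The `k`-span of commutators `[A,A]` in `A`. -/
def commSpan (k A : Type*) [CommSemiring k] [Ring A] [Algebra k A] : Submodule k A :=
  Submodule.span k {x : A | ∃ a b : A, x = a * b - b * a}

/-- `π₂ : A ⊗ A → R`, `x ⊗ y ↦ (ι x̄)(ι ȳ)`, for a commutative algebra `R` receiving
`A/[A,A]` through a linear map `ι`. -/
noncomputable def piTwo {k A R : Type*} [CommRing k] [Ring A] [Algebra k A]
    [CommRing R] [Algebra k R] (ι : (A ⧸ commSpan k A) →ₗ[k] R) :
    A ⊗[k] A →ₗ[k] R :=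
  TensorProduct.lift ((LinearMap.mul k R).compl₁₂
    (ι.comp (commSpan k A).mkQ) (ι.comp (commSpan k A).mkQ))


section DerAux

open TrivSqZeroExt

/-- The algebra map `R → R[ε]`, `x ↦ x + (d x) ε`, attached to a derivation. -/
noncomputable def derToHom {k R : Type*} [CommRing k] [CommRing R] [Algebra k R]
    (d : Derivation k R R) : R →ₐ[k] DualNumber R where
  toFun x := ⟨x, d x⟩
  map_one' := by ext <;> simp
  map_mul' x y := by
    refine TrivSqZeroExt.ext rfl ?_
    show _ = x • d y + MulOpposite.op y • d x
    simp [fst_mul, snd_mul, op_smul_eq_smul, smul_eq_mul, mul_comm]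
  map_zero' := by ext <;> simp
  map_add' x y := by refine TrivSqZeroExt.ext rfl ?_; show _ = d x + d y; simp
  commutes' c := by
    refine TrivSqZeroExt.ext ?_ ?_ <;>
      simp [TrivSqZeroExt.algebraMap_eq_inl' (R := R)]

/-- The derivation attached to an algebra map `R → R[ε]` lifting the identity. -/
noncomputable def homToDer {k R : Type*} [CommRing k] [CommRing R] [Algebra k R]
    (g : R →ₐ[k] DualNumber R) (hg : ∀ x, (g x).fst = x) :
    Derivation k R R :=
  Derivation.mk' ((TrivSqZeroExt.sndHom R R).restrictScalars k ∘ₗ g.toLinearMap)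
    (fun x y => by
      simp only [LinearMap.comp_apply, LinearMap.coe_restrictScalars,
        AlgHom.toLinearMap_apply, map_mul, TrivSqZeroExt.sndHom_apply,
        TrivSqZeroExt.snd_mul, hg, op_smul_eq_smul, smul_eq_mul])

universe v

/-- Unique extension of a linear map on generators to a derivation of `R`,
when `R` has the universal property of the symmetric algebra on `A ⧸ [A,A]`. -/
theorem derExtAux {k A R : Type v} [Field k] [Ring A] [Algebra k A]
    [CommRing R] [Algebra k R]
    (ι : (A ⧸ commSpan k A) →ₗ[k] R)
    (hUniv : ∀ (B : Type v) [CommRing B] [Algebra k B]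
      (f : (A ⧸ commSpan k A) →ₗ[k] B), ∃! g : R →ₐ[k] B, ∀ q, g (ι q) = f q)
    (L : (A ⧸ commSpan k A) →ₗ[k] R) :
    ∃! d : Derivation k R R, ∀ q, d (ι q) = L q := by
  have uniq : ∀ (d₁ d₂ : Derivation k R R), (∀ q, d₁ (ι q) = d₂ (ι q)) → d₁ = d₂ := by
    intro d₁ d₂ h
    obtain ⟨g, hg, hgu⟩ := hUniv (DualNumber R)
      (LinearMap.prod ι (d₁.toLinearMap ∘ₗ ι) : _ →ₗ[k] DualNumber R)
    have h1 : derToHom d₁ = g := hgu _ (fun q => TrivSqZeroExt.ext rfl rfl)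
    have h2 : derToHom d₂ = g := hgu _ (fun q => TrivSqZeroExt.ext rfl (by
      show d₂ (ι q) = d₁ (ι q)
      exact (h q).symm))
    ext x
    exact congrArg (fun (h : R →ₐ[k] DualNumber R) => (h x).snd) (h1.trans h2.symm)
  obtain ⟨g, hg, -⟩ := hUniv (DualNumber R) (LinearMap.prod ι L : _ →ₗ[k] DualNumber R)
  have hfst : ∀ x, (g x).fst = x := by
    obtain ⟨g₀, hg₀, hg₀u⟩ := hUniv R ι
    have e1 : ((TrivSqZeroExt.fstHom k R R).comp g) = g₀ := by
      refine hg₀u _ (fun q => ?_)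
      simp only [AlgHom.comp_apply, hg q]
      rfl
    have e2 : AlgHom.id k R = g₀ := hg₀u _ (fun q => rfl)
    intro x
    exact congrArg (fun (h : R →ₐ[k] R) => h x) (e1.trans e2.symm)
  refine ⟨homToDer g hfst, fun q => ?_, fun d hd => uniq _ _ (fun q => by
    rw [hd q]; show _ = (g (ι q)).snd; rw [hg q]; rfl)⟩
  show (g (ι q)).snd = L q
  rw [hg q]; rfl

end DerAux

universe u

set_option maxHeartbeats 2000000 in
/-- Proposition `R-Ind`: a double `(12)`-weak Poisson bracket
associated with the right bimodule structure induces a unique Poisson bracket on the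
symmetric algebra `Sym(A/[A,A])` (here modelled by a commutative algebra `R` with the
universal property of the symmetric algebra of the `k`-vector space `A/[A,A]`) such that
`{ā,b̄} = π₂⟪a,b⟫`. -/
theorem right_weak_poisson_induces_poisson_on_sym
    {k A R : Type u} [Field k] [CharZero k] [Ring A] [Algebra k A]
    [CommRing R] [Algebra k R]
    (S : BimodStr k A)
    (hS : ∀ (a b : A) (d : A ⊗[k] A),
      S.act a d b = ((1 : A) ⊗ₜ[k] a) * d * ((1 : A) ⊗ₜ[k] b))
    (D : DoubleBracket S)
    (hwk : ∀ a b c : A, jac D.br a b c = tau12 k A (jac D.br b a c))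
    (ι : (A ⧸ commSpan k A) →ₗ[k] R)
    (hUniv : ∀ (B : Type u) [CommRing B] [Algebra k B]
      (f : (A ⧸ commSpan k A) →ₗ[k] B), ∃! g : R →ₐ[k] B, ∀ q, g (ι q) = f q) :
    ∃ P : R →ₗ[k] R →ₗ[k] R,
      ((∀ x y z : R, P x (y * z) = y * P x z + P x y * z) ∧
       (∀ x y z : R, P (x * y) z = x * P y z + y * P x z) ∧
       (∀ a b : A, P (ι (Submodule.Quotient.mk a)) (ι (Submodule.Quotient.mk b))
          = piTwo ι (D.br a b))) ∧
      (∀ x y : R, P x y = - P y x) ∧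
      (∀ x y z : R, P x (P y z) + P y (P z x) + P z (P x y) = 0) ∧
      (∀ P' : R →ₗ[k] R →ₗ[k] R,
        ((∀ x y z : R, P' x (y * z) = y * P' x z + P' x y * z) ∧
         (∀ x y z : R, P' (x * y) z = x * P' y z + y * P' x z) ∧
         (∀ a b : A, P' (ι (Submodule.Quotient.mk a)) (ι (Submodule.Quotient.mk b))
            = piTwo ι (D.br a b))) → P' = P) := by
  classical
  -- abbreviations
  have derUniq : ∀ (d₁ d₂ : Derivation k R R), (∀ q, d₁ (ι q) = d₂ (ι q)) → d₁ = d₂ := by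
    intro d₁ d₂ h
    obtain ⟨d, -, hu⟩ := derExtAux ι hUniv (d₁.toLinearMap ∘ₗ ι)
    exact (hu d₁ (fun q => rfl)).trans (hu d₂ (fun q => (h q).symm)).symm
  choose dd hdd using fun L => (derExtAux ι hUniv L).exists
  -- π₂ basics
  have piTwo_tmul : ∀ x y : A, piTwo ι (x ⊗ₜ[k] y)
      = ι (Submodule.Quotient.mk x) * ι (Submodule.Quotient.mk y) := by
    intro x y; simp [piTwo]
  have mkmul : ∀ x y : A, (Submodule.Quotient.mk (x * y) : A ⧸ commSpan k A)
      = Submodule.Quotient.mk (y * x) := by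
    intro x y
    exact (Submodule.Quotient.eq _).mpr (Submodule.subset_span ⟨x, y, rfl⟩)
  have hswap : ∀ d : A ⊗[k] A, piTwo ι (swapT k A d) = piTwo ι d := by
    have : piTwo ι ∘ₗ swapT k A = piTwo ι := by
      refine TensorProduct.ext' fun x y => ?_
      simp [swapT, piTwo_tmul, mul_comm]
    intro d; exact congrArg (fun f : _ →ₗ[k] R => f d) this
  have hmulflip : ∀ (x : A) (d : A ⊗[k] A),
      piTwo ι (((1 : A) ⊗ₜ[k] x) * d) = piTwo ι (d * ((1 : A) ⊗ₜ[k] x)) := by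
    intro x
    have : piTwo ι ∘ₗ LinearMap.mulLeft k (((1 : A) ⊗ₜ[k] x))
        = piTwo ι ∘ₗ LinearMap.mulRight k (((1 : A) ⊗ₜ[k] x)) := by
      refine TensorProduct.ext' fun u v => ?_
      simp only [LinearMap.comp_apply, LinearMap.mulLeft_apply, LinearMap.mulRight_apply,
        Algebra.TensorProduct.tmul_mul_tmul, one_mul, mul_one, piTwo_tmul]
      rw [mkmul x v]
    intro d; exact congrArg (fun f : _ →ₗ[k] R => f d) this
  have hact : ∀ (b c : A) (d : A ⊗[k] A),
      piTwo ι (S.act b d c) = piTwo ι (d * ((1 : A) ⊗ₜ[k] (c * b))) := by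
    intro b c d
    rw [hS, mul_assoc, hmulflip, mul_assoc, Algebra.TensorProduct.tmul_mul_tmul, one_mul]
  have hstar : ∀ (b c : A) (d : A ⊗[k] A),
      piTwo ι (S.star b d c) = piTwo ι (swapT k A d * ((1 : A) ⊗ₜ[k] (c * b))) := by
    intro b c d
    rw [BimodOn.star, hswap, hact]
  -- brR
  set brR : A →ₗ[k] A →ₗ[k] R :=
    (LinearMap.llcomp k A (A ⊗[k] A) R (piTwo ι)).comp D.br with hbrR
  have brR_apply : ∀ a b, brR a b = piTwo ι (D.br a b) := fun a b => rfl
  have h2kill : ∀ a x y : A, brR a (x * y) = brR a (y * x) := by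
    intro a x y
    rw [brR_apply, brR_apply, D.leibniz_right, D.leibniz_right, map_add, map_add,
      hact, hact, hact, hact, one_mul, mul_one, one_mul, mul_one]
    exact add_comm _ _
  have h1kill : ∀ x y c : A, brR (x * y) c = brR (y * x) c := by
    intro x y c
    rw [brR_apply, brR_apply, D.leibniz_left, D.leibniz_left, map_add, map_add,
      hstar, hstar, hstar, hstar, one_mul, mul_one, one_mul, mul_one]
    exact add_comm _ _
  -- L2
  have hker2 : ∀ a : A, commSpan k A ≤ LinearMap.ker (brR a) := by
    intro a
    refine Submodule.span_le.2 ?_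
    rintro _ ⟨x, y, rfl⟩
    simp only [SetLike.mem_coe, LinearMap.mem_ker, map_sub, h2kill a x y, sub_self]
  set L2 : A → ((A ⧸ commSpan k A) →ₗ[k] R) :=
    fun a => Submodule.liftQ (commSpan k A) (brR a) (hker2 a) with hL2def
  have L2_apply : ∀ a b : A, L2 a (Submodule.Quotient.mk b) = brR a b := fun a b => rfl
  have L2add : ∀ a a' : A, L2 (a + a') = L2 a + L2 a' := by
    intro a a'
    refine Submodule.linearMap_qext _ (LinearMap.ext fun b => ?_)
    simp [L2_apply, map_add]
  have L2smul : ∀ (c : k) (a : A), L2 (c • a) = c • L2 a := by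
    intro c a
    refine Submodule.linearMap_qext _ (LinearMap.ext fun b => ?_)
    simp [L2_apply, map_smul]
  have ddadd : ∀ L L' : (A ⧸ commSpan k A) →ₗ[k] R, dd (L + L') = dd L + dd L' := by
    intro L L'
    refine derUniq _ _ fun q => ?_
    simp [hdd]
  have ddsmul : ∀ (c : k) (L : (A ⧸ commSpan k A) →ₗ[k] R), dd (c • L) = c • dd L := by
    intro c L
    refine derUniq _ _ fun q => ?_
    simp [hdd]
  -- eval/Mf
  have hkillev : ∀ x y : A, L2 (x * y) = L2 (y * x) := by
    intro x y
    refine Submodule.linearMap_qext _ (LinearMap.ext fun b => ?_)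
    simp [L2_apply, h1kill]
  have hMf : ∀ y : R, ∃ M : (A ⧸ commSpan k A) →ₗ[k] R,
      ∀ a : A, M (Submodule.Quotient.mk a) = dd (L2 a) y := by
    intro y
    refine ⟨Submodule.liftQ (commSpan k A)
      ({ toFun := fun a => dd (L2 a) y
         map_add' := fun a a' => by
           show dd (L2 (a + a')) y = dd (L2 a) y + dd (L2 a') y
           rw [L2add, ddadd]; simp
         map_smul' := fun c a => by
           show dd (L2 (c • a)) y = c • dd (L2 a) y
           rw [L2smul, ddsmul]; simp } : A →ₗ[k] R) ?_,
      fun a => rfl⟩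
    refine Submodule.span_le.2 ?_
    rintro _ ⟨x, z, rfl⟩
    simp only [SetLike.mem_coe, LinearMap.mem_ker, map_sub, LinearMap.coe_mk,
      AddHom.coe_mk, hkillev x z, sub_self]
  choose Mf hMf using hMf
  have Mfadd : ∀ y y' : R, Mf (y + y') = Mf y + Mf y' := by
    intro y y'
    refine Submodule.linearMap_qext _ (LinearMap.ext fun b => ?_)
    simp [hMf, map_add]
  have Mfsmul : ∀ (c : k) (y : R), Mf (c • y) = c • Mf y := by
    intro c y
    refine Submodule.linearMap_qext _ (LinearMap.ext fun b => ?_)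
    simp [hMf, map_smul]
  -- the bracket
  set P : R →ₗ[k] R →ₗ[k] R := LinearMap.mk₂ k (fun x y => dd (Mf y) x)
    (fun x x' y => by simp)
    (fun c x y => by simp)
    (fun x y y' => by
      show dd (Mf (y + y')) x = dd (Mf y) x + dd (Mf y') x
      rw [Mfadd, ddadd]; simp)
    (fun c x y => by
      show dd (Mf (c • y)) x = c • dd (Mf y) x
      rw [Mfsmul, ddsmul]; simp) with hPdef
  have hPapp : ∀ x y : R, P x y = dd (Mf y) x := fun x y => rfl
  have hPgen1 : ∀ (a : A) (y : R), P (ι (Submodule.Quotient.mk a)) y = dd (L2 a) y := by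
    intro a y
    rw [hPapp, hdd, hMf]
  have hPgg : ∀ a b : A, P (ι (Submodule.Quotient.mk a)) (ι (Submodule.Quotient.mk b))
      = piTwo ι (D.br a b) := by
    intro a b
    rw [hPgen1, hdd, L2_apply, brR_apply]
  -- left Leibniz
  have hLeibL : ∀ x y z : R, P (x * y) z = x * P y z + y * P x z := by
    intro x y z
    rw [hPapp, hPapp, hPapp, Derivation.leibniz, smul_eq_mul, smul_eq_mul]
  -- right Leibniz
  have hLeibR : ∀ x y z : R, P x (y * z) = y * P x z + P x y * z := by
    intro x y z
    have : dd (Mf (y * z)) = y • dd (Mf z) + z • dd (Mf y) := by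
      refine derUniq _ _ fun q => ?_
      obtain ⟨a, rfl⟩ := Submodule.Quotient.mk_surjective _ q
      rw [hdd, hMf, Derivation.leibniz]
      simp [hdd, hMf, smul_eq_mul]
    rw [hPapp, this]
    simp only [Derivation.coe_add, Derivation.coe_smul, Pi.add_apply, Pi.smul_apply,
      smul_eq_mul]
    rw [hPapp, hPapp]
    ring
  -- antisymmetry
  have hanti2 : ∀ a b : A, piTwo ι (D.br a b) = - piTwo ι (D.br b a) := by
    intro a b
    rw [D.antisymm a b, map_neg, hswap]
  have hantigen : ∀ (b : A) (x : R),
      P x (ι (Submodule.Quotient.mk b)) = - P (ι (Submodule.Quotient.mk b)) x := by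
    intro b x
    have : dd (Mf (ι (Submodule.Quotient.mk b))) = - dd (L2 b) := by
      refine derUniq _ _ fun q => ?_
      obtain ⟨a, rfl⟩ := Submodule.Quotient.mk_surjective _ q
      rw [hdd, hMf]
      simp only [Derivation.neg_apply]
      rw [hdd, hdd, L2_apply, L2_apply, brR_apply, brR_apply]
      exact hanti2 a b
    rw [hPapp, this, Derivation.neg_apply, hPgen1]
  have hanti : ∀ x y : R, P x y = - P y x := by
    intro x y
    have hd1 : ∀ u v : R, (P x) (u * v) = u • (P x) v + v • (P x) u := by
      intro u v
      rw [hLeibR, smul_eq_mul, smul_eq_mul]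
      ring
    have hd2 : ∀ u v : R, (-(P.flip x)) (u * v) = u • (-(P.flip x)) v + v • (-(P.flip x)) u := by
      intro u v
      simp only [LinearMap.neg_apply, LinearMap.flip_apply, smul_eq_mul]
      rw [hLeibL]
      ring
    have := derUniq (Derivation.mk' (P x) hd1) (Derivation.mk' (-(P.flip x)) hd2) ?_
    · have h := congrArg (fun d : Derivation k R R => d y) this
      simpa using h
    · intro q
      obtain ⟨b, rfl⟩ := Submodule.Quotient.mk_surjective _ q
      simp only [Derivation.coe_mk', LinearMap.neg_apply, LinearMap.flip_apply]
      exact hantigen b x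
  -- π₃ and its symmetry
  set pi3 : (A ⊗[k] A) ⊗[k] A →ₗ[k] R := TensorProduct.lift
    ((LinearMap.mul k R).compl₁₂ (piTwo ι) (ι ∘ₗ (commSpan k A).mkQ)) with hpi3def
  have pi3_tmul : ∀ (u : A ⊗[k] A) (z : A),
      pi3 (u ⊗ₜ[k] z) = piTwo ι u * ι (Submodule.Quotient.mk z) := by
    intro u z; simp [hpi3def]
  have htau123 : ∀ t, pi3 (tau123 k A t) = pi3 t := by
    have h : pi3 ∘ₗ tau123 k A = pi3 := TensorProduct.ext_threefold fun x y z => by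
      simp [tau123, pi3_tmul, piTwo_tmul]; ring
    intro t; exact congrArg (fun f : _ →ₗ[k] R => f t) h
  have htau132 : ∀ t, pi3 (tau132 k A t) = pi3 t := by
    have h : pi3 ∘ₗ tau132 k A = pi3 := TensorProduct.ext_threefold fun x y z => by
      simp [tau132, pi3_tmul, piTwo_tmul]; ring
    intro t; exact congrArg (fun f : _ →ₗ[k] R => f t) h
  have htau12 : ∀ t, pi3 (tau12 k A t) = pi3 t := by
    have h : pi3 ∘ₗ tau12 k A = pi3 := TensorProduct.ext_threefold fun x y z => by
      simp [tau12, pi3_tmul, piTwo_tmul]; ring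
    intro t; exact congrArg (fun f : _ →ₗ[k] R => f t) h
  -- key expansion of P on generators against π₂
  have hP2 : ∀ (a : A) (d : A ⊗[k] A), P (ι (Submodule.Quotient.mk a)) (piTwo ι d)
      = pi3 (trL D.br a d) + pi3 (trL D.br a (swapT k A d)) := by
    intro a
    have h : (P (ι (Submodule.Quotient.mk a))) ∘ₗ piTwo ι
        = pi3 ∘ₗ trL D.br a + pi3 ∘ₗ (trL D.br a ∘ₗ swapT k A) := by
      refine TensorProduct.ext' fun x y => ?_
      simp only [LinearMap.comp_apply, LinearMap.add_apply, piTwo_tmul]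
      rw [hLeibR, hPgg, hPgg]
      simp only [trL, swapT, LinearEquiv.coe_coe, TensorProduct.comm_tmul,
        TensorProduct.map_tmul, LinearMap.id_coe, id_eq, pi3_tmul]
      ring
    intro d; exact congrArg (fun f : _ →ₗ[k] R => f d) h
  -- jac under π₃
  have hjac : ∀ a b c : A, pi3 (jac D.br a b c)
      = pi3 (trL D.br a (D.br b c)) + pi3 (trL D.br b (D.br c a))
        + pi3 (trL D.br c (D.br a b)) := by
    intro a b c
    rw [jac, map_add, map_add, htau123, htau132]
  have hTcyc : ∀ a b c : A, pi3 (jac D.br a b c) = pi3 (jac D.br b c a) := by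
    intro a b c; rw [hjac, hjac]; ring
  have hT12 : ∀ a b c : A, pi3 (jac D.br a b c) = pi3 (jac D.br b a c) := by
    intro a b c; rw [hwk a b c, htau12]
  have hswapbr : ∀ b c : A, swapT k A (D.br b c) = - D.br c b := by
    intro b c; rw [D.antisymm c b, neg_neg]
  -- Jacobi identity on generators
  have hJgen : ∀ a b c : A,
      P (ι (Submodule.Quotient.mk a))
        (P (ι (Submodule.Quotient.mk b)) (ι (Submodule.Quotient.mk c)))
      + P (ι (Submodule.Quotient.mk b))
        (P (ι (Submodule.Quotient.mk c)) (ι (Submodule.Quotient.mk a)))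
      + P (ι (Submodule.Quotient.mk c))
        (P (ι (Submodule.Quotient.mk a)) (ι (Submodule.Quotient.mk b))) = 0 := by
    intro a b c
    rw [hPgg, hPgg, hPgg, hP2, hP2, hP2, hswapbr, hswapbr, hswapbr]
    simp only [map_neg]
    have h1 := hjac a b c
    have h2 := hjac a c b
    have h3 : pi3 (jac D.br a c b) = pi3 (jac D.br a b c) := by
      rw [hT12 a c b]; exact hTcyc c a b
    linear_combination -h1 + h2 - h3
  -- the Jacobiator as a linear map in its "first" slot
  set Jl : R → R → R →ₗ[k] R := fun y z => P.flip (P y z) + P y ∘ₗ P z + P z ∘ₗ P.flip y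
    with hJldef
  have hJlapp : ∀ y z x : R, Jl y z x = P x (P y z) + P y (P z x) + P z (P x y) := by
    intro y z x
    simp [hJldef]
  have hJlcyc : ∀ x y z : R, Jl y z x = Jl z x y := by
    intro x y z; rw [hJlapp, hJlapp]; ring
  have hJlLeib : ∀ (y z x₁ x₂ : R),
      Jl y z (x₁ * x₂) = x₁ • Jl y z x₂ + x₂ • Jl y z x₁ := by
    intro y z x₁ x₂
    simp only [hJlapp, smul_eq_mul]
    rw [hLeibL x₁ x₂ (P y z),
        hLeibR z x₁ x₂, hLeibL x₁ x₂ y, map_add, map_add,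
        hLeibR y x₁ (P z x₂), hLeibR y (P z x₁) x₂,
        hLeibR z x₁ (P x₂ y), hLeibR z x₂ (P x₁ y),
        hanti x₂ y, hanti x₁ y, map_neg, map_neg]
    ring
  -- reduction of derivation-like maps to generators
  have derzero : ∀ (f : R →ₗ[k] R), (∀ u v, f (u * v) = u • f v + v • f u) →
      (∀ a : A, f (ι (Submodule.Quotient.mk a)) = 0) → ∀ x, f x = 0 := by
    intro f hf h0 x
    have hz := derUniq (Derivation.mk' f hf) 0 (fun q => by
      obtain ⟨a, rfl⟩ := Submodule.Quotient.mk_surjective _ q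
      simp only [Derivation.coe_mk', Derivation.coe_zero, Pi.zero_apply]
      exact h0 a)
    have h := congrArg (fun d : Derivation k R R => d x) hz
    simpa using h
  have step1 : ∀ (b c : A) (x : R),
      Jl (ι (Submodule.Quotient.mk b)) (ι (Submodule.Quotient.mk c)) x = 0 :=
    fun b c x => derzero _ (hJlLeib _ _)
      (fun a => (hJlapp _ _ _).trans (hJgen a b c)) x
  have step2 : ∀ (c : A) (x y : R), Jl (ι (Submodule.Quotient.mk c)) x y = 0 :=
    fun c x y => derzero _ (hJlLeib _ _)
      (fun b => (hJlcyc _ _ _).trans ((hJlcyc _ _ _).trans (step1 b c x))) y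
  have step3 : ∀ y z x : R, Jl y z x = 0 := by
    intro y z
    refine derzero _ (hJlLeib _ _) (fun a => ?_)
    exact (hJlcyc _ _ _).trans ((hJlcyc _ _ _).trans (step2 a y z))
  have hjacobi : ∀ x y z : R, P x (P y z) + P y (P z x) + P z (P x y) = 0 :=
    fun x y z => (hJlapp y z x).symm.trans (step3 y z x)
  -- uniqueness
  have huniq : ∀ P' : R →ₗ[k] R →ₗ[k] R,
      ((∀ x y z : R, P' x (y * z) = y * P' x z + P' x y * z) ∧
       (∀ x y z : R, P' (x * y) z = x * P' y z + y * P' x z) ∧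
       (∀ a b : A, P' (ι (Submodule.Quotient.mk a)) (ι (Submodule.Quotient.mk b))
          = piTwo ι (D.br a b))) → P' = P := by
    rintro P' ⟨hR', hL', hg'⟩
    have e1 : ∀ (a : A) (y : R),
        P' (ι (Submodule.Quotient.mk a)) y = P (ι (Submodule.Quotient.mk a)) y := by
      intro a y
      have hz := derUniq
        (Derivation.mk' (P' (ι (Submodule.Quotient.mk a))) (fun u v => by
          rw [hR']; simp only [smul_eq_mul]; ring))
        (Derivation.mk' (P (ι (Submodule.Quotient.mk a))) (fun u v => by
          rw [hLeibR]; simp only [smul_eq_mul]; ring))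
        (fun q => by
          obtain ⟨b, rfl⟩ := Submodule.Quotient.mk_surjective _ q
          simp only [Derivation.coe_mk']
          rw [hg', hPgg])
      have h := congrArg (fun d : Derivation k R R => d y) hz
      simpa using h
    have e2 : ∀ x y : R, P' x y = P x y := by
      intro x y
      have hz := derUniq
        (Derivation.mk' (P'.flip y) (fun u v => by
          simp only [LinearMap.flip_apply, smul_eq_mul]
          rw [hL']))
        (Derivation.mk' (P.flip y) (fun u v => by
          simp only [LinearMap.flip_apply, smul_eq_mul]
          rw [hLeibL]))
        (fun q => by
          obtain ⟨a, rfl⟩ := Submodule.Quotient.mk_surjective _ q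
          simp only [Derivation.coe_mk', LinearMap.flip_apply]
          exact e1 a y)
      have h := congrArg (fun d : Derivation k R R => d x) hz
      simpa using h
    exact LinearMap.ext fun x => LinearMap.ext fun y => e2 x y
  exact ⟨P, ⟨hLeibR, hLeibL, hPgg⟩, hanti, hjacobi, huniq⟩
end

section
/- Let ⟪-,-⟫₁ and ⟪-,-⟫₂ be double brackets on A associated with the left and right bimodule structures respectively, with ⟪-,-⟫₁ = ° ∘ ⟪-,-⟫₂. If either ⟪-,-⟫₁ is [(12),(13)]-weak Poisson or ⟪-,-⟫₂ is (12)-weak Poisson, then both conditions hold and the two double brackets induce the same Poisson bracket on the symmetric algebra Sym(A/[A,A]): the unique Poisson brackets {-,-}_{j,Sym} determined by {ā,b̄}_{j,Sym} = π₂(⟪a,b⟫_j) coincide for j = 1,2. -/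
open scoped TensorProduct

universe u

section TauAux

variable {k A : Type*} [CommRing k] [Ring A] [Algebra k A]

@[simp] lemma swapT_tmul (a b : A) : swapT k A (a ⊗ₜ[k] b) = b ⊗ₜ[k] a := rfl

@[simp] lemma swapT_swapT (d : A ⊗[k] A) : swapT k A (swapT k A d) = d := by
  induction d using TensorProduct.induction_on with
  | zero => simp
  | tmul => rfl
  | add x y hx hy => simp [hx, hy]

@[simp] lemma tau12_tmul (x y : A ⊗[k] A) : True := trivial

@[simp] lemma tau12_tmul' (w : A ⊗[k] A) (z : A) :
    tau12 k A (w ⊗ₜ[k] z) = (swapT k A w) ⊗ₜ[k] z := rfl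

@[simp] lemma tau123_tmul (x y z : A) :
    tau123 k A ((x ⊗ₜ[k] y) ⊗ₜ[k] z) = (z ⊗ₜ[k] x) ⊗ₜ[k] y := rfl

@[simp] lemma tau132_tmul (x y z : A) :
    tau132 k A ((x ⊗ₜ[k] y) ⊗ₜ[k] z) = (y ⊗ₜ[k] z) ⊗ₜ[k] x := rfl

lemma tcomp {f g : (A ⊗[k] A) ⊗[k] A →ₗ[k] (A ⊗[k] A) ⊗[k] A}
    (h : ∀ x y z : A, f ((x ⊗ₜ[k] y) ⊗ₜ[k] z) = g ((x ⊗ₜ[k] y) ⊗ₜ[k] z))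
    (t : (A ⊗[k] A) ⊗[k] A) : f t = g t :=
  LinearMap.congr_fun (TensorProduct.ext_threefold h) t

lemma T1 (t : (A ⊗[k] A) ⊗[k] A) : tau132 k A (tau12 k A t) = tau12 k A (tau123 k A t) :=
  tcomp (f := (tau132 k A) ∘ₗ (tau12 k A)) (g := (tau12 k A) ∘ₗ (tau123 k A))
    (fun x y z => by simp) t

lemma T2 (t : (A ⊗[k] A) ⊗[k] A) :
    tau123 k A (tau12 k A t) = tau12 k A (tau123 k A (tau123 k A t)) :=
  tcomp (f := (tau123 k A) ∘ₗ (tau12 k A))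
    (g := (tau12 k A) ∘ₗ ((tau123 k A) ∘ₗ (tau123 k A))) (fun x y z => by simp) t

lemma T3 (t : (A ⊗[k] A) ⊗[k] A) : tau123 k A (tau123 k A t) = tau132 k A t :=
  tcomp (f := (tau123 k A) ∘ₗ (tau123 k A)) (g := tau132 k A) (fun x y z => by simp) t

lemma T4 (t : (A ⊗[k] A) ⊗[k] A) : tau123 k A (tau132 k A t) = t :=
  tcomp (f := (tau123 k A) ∘ₗ (tau132 k A)) (g := LinearMap.id) (fun x y z => by simp) t

lemma T5 (t : (A ⊗[k] A) ⊗[k] A) : tau12 k A (tau123 k A (tau12 k A (tau123 k A t))) = t :=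
  tcomp (f := ((tau12 k A) ∘ₗ (tau123 k A)) ∘ₗ ((tau12 k A) ∘ₗ (tau123 k A)))
    (g := LinearMap.id) (fun x y z => by simp) t

lemma T9 (t : (A ⊗[k] A) ⊗[k] A) : tau123 k A (tau12 k A (tau123 k A t)) = tau12 k A t :=
  tcomp (f := (tau123 k A) ∘ₗ ((tau12 k A) ∘ₗ (tau123 k A))) (g := tau12 k A)
    (fun x y z => by simp) t

lemma T10 (t : (A ⊗[k] A) ⊗[k] A) :
    tau12 k A (tau123 k A (tau123 k A t)) = tau123 k A (tau12 k A t) :=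
  (T2 t).symm

-- tau23 ∘ tau12 ∘ tau23 = tau13 = tau123 ∘ tau12
lemma T8 (t : (A ⊗[k] A) ⊗[k] A) :
    tau12 k A (tau123 k A (tau12 k A (tau12 k A (tau123 k A (tau12 k A (tau123 k A t)))))) =
      tau123 k A (tau12 k A (tau12 k A (tau123 k A t))) := by
  exact tcomp (f := (tau12 k A) ∘ₗ ((tau123 k A) ∘ₗ ((tau12 k A) ∘ₗ ((tau12 k A) ∘ₗ ((tau123 k A) ∘ₗ ((tau12 k A) ∘ₗ (tau123 k A)))))) )
    (g := (tau123 k A) ∘ₗ ((tau12 k A) ∘ₗ ((tau12 k A) ∘ₗ (tau123 k A)))) (fun x y z => by simp) t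

end TauAux

section JacAux

variable {k A : Type*} [CommRing k] [Ring A] [Algebra k A]

lemma trL_tmul (br : A →ₗ[k] A →ₗ[k] A ⊗[k] A) (a u v : A) :
    trL br a (u ⊗ₜ[k] v) = (br a u) ⊗ₜ[k] v := rfl

lemma trL_swap (br₁ br₂ : A →ₗ[k] A →ₗ[k] A ⊗[k] A)
    (h : ∀ x y : A, br₂ x y = swapT k A (br₁ x y)) (a : A) (d : A ⊗[k] A) :
    trL br₂ a d = tau12 k A (trL br₁ a d) := by
  induction d using TensorProduct.induction_on with
  | zero => simp
  | tmul u v => rw [trL_tmul, trL_tmul, tau12_tmul', h]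
  | add x y hx hy => rw [map_add, map_add, map_add, hx, hy]

lemma jac_cyclic (br : A →ₗ[k] A →ₗ[k] A ⊗[k] A) (a b c : A) :
    jac br a b c = tau123 k A (jac br b c a) := by
  unfold jac
  rw [map_add, map_add, T3, T4]
  abel

lemma jac_swap (br₁ br₂ : A →ₗ[k] A →ₗ[k] A ⊗[k] A)
    (hbr : ∀ a b : A, br₁ a b = swapT k A (br₂ a b))
    (hanti : ∀ a b : A, br₁ a b = - swapT k A (br₁ b a)) (a b c : A) :
    jac br₂ a b c = - (tau12 k A (tau123 k A (jac br₁ c b a))) := by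
  have h2 : ∀ x y : A, br₂ x y = swapT k A (br₁ x y) := fun x y => by
    rw [hbr]; simp
  have h3 : ∀ x y : A, br₂ x y = - br₁ y x := fun x y => by
    rw [h2, hanti y x]; simp
  unfold jac
  rw [trL_swap br₁ br₂ h2, trL_swap br₁ br₂ h2, trL_swap br₁ br₂ h2]
  rw [h3 b c, h3 c a, h3 a b]
  rw [map_neg, map_neg, map_neg, map_neg, map_neg, map_neg, map_neg, map_neg]
  rw [map_add, map_add, map_add, map_add]
  -- goal: -τ12 trL₁ a (br₁ c b) + τ123 (-τ12 trL₁ b (br₁ a c)) + τ132 (-τ12 trL₁ c (br₁ b a))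
  --     = -(τ12 τ123 trL₁ c (br₁ b a) + τ12 τ123 τ123 trL₁ b (br₁ a c) + τ12 τ123 τ132 trL₁ a (br₁ c b))
  rw [T1 ((trL br₁ c) ((br₁ b) a))]   -- τ132 τ12 = τ12 τ123
  rw [T2 ((trL br₁ b) ((br₁ a) c))]   -- τ123 τ12 = τ12 τ123 τ123
  rw [T4 ((trL br₁ a) ((br₁ c) b))]
  abel

end JacAux

section CondAux

variable {k A : Type*} [CommRing k] [Ring A] [Algebra k A]

lemma T6 (t : (A ⊗[k] A) ⊗[k] A) : tau12 k A (tau12 k A t) = t :=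
  tcomp (f := (tau12 k A) ∘ₗ (tau12 k A)) (g := LinearMap.id) (fun x y z => by simp) t

lemma T4' (t : (A ⊗[k] A) ⊗[k] A) : tau132 k A (tau123 k A t) = t :=
  tcomp (f := (tau132 k A) ∘ₗ (tau123 k A)) (g := LinearMap.id) (fun x y z => by simp) t

lemma T11 (t : (A ⊗[k] A) ⊗[k] A) :
    tau132 k A (tau12 k A (tau123 k A t)) = tau123 k A (tau12 k A t) :=
  tcomp (f := (tau132 k A) ∘ₗ ((tau12 k A) ∘ₗ (tau123 k A)))
    (g := (tau123 k A) ∘ₗ (tau12 k A)) (fun x y z => by simp) t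

lemma T12 (t : (A ⊗[k] A) ⊗[k] A) :
    tau12 k A (tau132 k A (tau12 k A t)) = tau123 k A t :=
  tcomp (f := (tau12 k A) ∘ₗ ((tau132 k A) ∘ₗ (tau12 k A)))
    (g := tau123 k A) (fun x y z => by simp) t

/-- weak condition C' : `jac c b a = τ13 (jac c a b)` with `τ13 = τ123 ∘ τ12`. -/
lemma d1_iff_cp (br₁ : A →ₗ[k] A →ₗ[k] A ⊗[k] A) :
    (∀ a b c : A, jac br₁ a b c = tau12 k A (jac br₁ c b a)) ↔
    (∀ a b c : A, jac br₁ c b a = tau123 k A (tau12 k A (jac br₁ c a b))) := by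
  constructor
  · intro h a b c
    rw [h c b a, jac_cyclic br₁ a b c, jac_cyclic br₁ b c a, T10]
  · intro h x y z
    have := h z y x
    rw [jac_cyclic br₁ x z y] at this
    rw [this, T9]

lemma d2_iff_cp (br₁ br₂ : A →ₗ[k] A →ₗ[k] A ⊗[k] A)
    (hbr : ∀ a b : A, br₁ a b = swapT k A (br₂ a b))
    (hanti : ∀ a b : A, br₁ a b = - swapT k A (br₁ b a)) :
    (∀ a b c : A, jac br₂ a b c = tau12 k A (jac br₂ b a c)) ↔
    (∀ a b c : A, jac br₁ c b a = tau123 k A (tau12 k A (jac br₁ c a b))) := by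
  have key : ∀ a b c : A,
      (jac br₂ a b c = tau12 k A (jac br₂ b a c)) ↔
      (tau12 k A (tau123 k A (jac br₁ c b a)) = tau123 k A (jac br₁ c a b)) := by
    intro a b c
    rw [jac_swap br₁ br₂ hbr hanti a b c, jac_swap br₁ br₂ hbr hanti b a c, map_neg,
      neg_inj, T6]
  constructor
  · intro h a b c
    have h2 := (key a b c).mp (h a b c)
    have h4 := congrArg (tau12 k A) h2
    rw [T6] at h4
    have h5 := congrArg (tau132 k A) h4
    rw [T4'] at h5
    rw [h5, T11]
  · intro h a b c
    refine (key a b c).mpr ?_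
    rw [h a b c, T3, T12]

end CondAux

section PiAux

variable {k A R : Type*} [CommRing k] [Ring A] [Algebra k A] [CommRing R] [Algebra k R]

lemma qm (a b : A) :
    (Submodule.Quotient.mk (p := commSpan k A) (a * b)) = Submodule.Quotient.mk (b * a) := by
  rw [Submodule.Quotient.eq]
  exact Submodule.subset_span ⟨a, b, rfl⟩

variable (ι : (A ⧸ commSpan k A) →ₗ[k] R)

lemma piTwo_tmul (u v : A) :
    piTwo ι (u ⊗ₜ[k] v) =
      ι (Submodule.Quotient.mk u) * ι (Submodule.Quotient.mk v) := by
  simp [piTwo]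

lemma piTwo_swapT (d : A ⊗[k] A) : piTwo ι (swapT k A d) = piTwo ι d := by
  induction d using TensorProduct.induction_on with
  | zero => simp
  | tmul u v => rw [swapT_tmul, piTwo_tmul, piTwo_tmul, mul_comm]
  | add x y hx hy => rw [map_add, map_add, map_add, hx, hy]

lemma piTwo_mul_left_one (x : A) (d : A ⊗[k] A) :
    piTwo ι ((x ⊗ₜ[k] (1 : A)) * d) = piTwo ι (d * (x ⊗ₜ[k] (1 : A))) := by
  induction d using TensorProduct.induction_on with
  | zero => simp
  | tmul u v =>
      rw [Algebra.TensorProduct.tmul_mul_tmul, Algebra.TensorProduct.tmul_mul_tmul,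
        piTwo_tmul, piTwo_tmul, one_mul, mul_one, qm x u]
  | add p q hp hq => rw [mul_add, add_mul, map_add, map_add, hp, hq]

/-- `π₃ : (A ⊗ A) ⊗ A → R`. -/
noncomputable def piThree : (A ⊗[k] A) ⊗[k] A →ₗ[k] R :=
  TensorProduct.lift ((LinearMap.mul k R).compl₁₂ (piTwo ι)
    (ι.comp (commSpan k A).mkQ))

lemma piThree_tmul (w : A ⊗[k] A) (c : A) :
    piThree ι (w ⊗ₜ[k] c) = piTwo ι w * ι (Submodule.Quotient.mk c) := by
  simp [piThree]

lemma piThree_tau12 (t : (A ⊗[k] A) ⊗[k] A) : piThree ι (tau12 k A t) = piThree ι t :=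
  LinearMap.congr_fun (TensorProduct.ext_threefold (g := (piThree ι) ∘ₗ (tau12 k A))
    (h := piThree ι) (fun x y z => by
      simp only [LinearMap.comp_apply, tau12_tmul', swapT_tmul, piThree_tmul, piTwo_tmul]
      ring)) t

lemma piThree_tau123 (t : (A ⊗[k] A) ⊗[k] A) : piThree ι (tau123 k A t) = piThree ι t :=
  LinearMap.congr_fun (TensorProduct.ext_threefold (g := (piThree ι) ∘ₗ (tau123 k A))
    (h := piThree ι) (fun x y z => by
      simp only [LinearMap.comp_apply, tau123_tmul, piThree_tmul, piTwo_tmul]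
      ring)) t

lemma piThree_tau132 (t : (A ⊗[k] A) ⊗[k] A) : piThree ι (tau132 k A t) = piThree ι t :=
  LinearMap.congr_fun (TensorProduct.ext_threefold (g := (piThree ι) ∘ₗ (tau132 k A))
    (h := piThree ι) (fun x y z => by
      simp only [LinearMap.comp_apply, tau132_tmul, piThree_tmul, piTwo_tmul]
      ring)) t

end PiAux

set_option maxHeartbeats 1000000 in
/-- Theorem `Thm-LR`: for swap-equivalent double brackets `⟪-,-⟫₁`
(left bimodule structure) and `⟪-,-⟫₂` (right bimodule structure), if either `⟪-,-⟫₁` is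
`[(12),(13)]`-weak Poisson or `⟪-,-⟫₂` is `(12)`-weak Poisson then both hold, and the two
double brackets induce the same Poisson bracket on `Sym(A/[A,A])` (here modelled by a
commutative algebra `R` with the universal property of the symmetric algebra of
`A/[A,A]`). -/
theorem left_right_same_poisson_on_sym
    {k A R : Type u} [Field k] [CharZero k] [Ring A] [Algebra k A]
    [CommRing R] [Algebra k R]
    (SL : BimodStr k A)
    (hL : ∀ (a b : A) (d : A ⊗[k] A),
      SL.act a d b = (a ⊗ₜ[k] (1 : A)) * d * (b ⊗ₜ[k] (1 : A)))
    (SR : BimodStr k A)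
    (hR : ∀ (a b : A) (d : A ⊗[k] A),
      SR.act a d b = ((1 : A) ⊗ₜ[k] a) * d * ((1 : A) ⊗ₜ[k] b))
    (D₁ : DoubleBracket SL) (D₂ : DoubleBracket SR)
    (hbr : ∀ a b : A, D₁.br a b = swapT k A (D₂.br a b))
    (hwk : (∀ a b c : A, jac D₁.br a b c = tau12 k A (jac D₁.br c b a)) ∨
           (∀ a b c : A, jac D₂.br a b c = tau12 k A (jac D₂.br b a c)))
    (ι : (A ⧸ commSpan k A) →ₗ[k] R)
    (hUniv : ∀ (B : Type u) [CommRing B] [Algebra k B]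
      (f : (A ⧸ commSpan k A) →ₗ[k] B), ∃! g : R →ₐ[k] B, ∀ q, g (ι q) = f q) :
    ((∀ a b c : A, jac D₁.br a b c = tau12 k A (jac D₁.br c b a)) ∧
     (∀ a b c : A, jac D₂.br a b c = tau12 k A (jac D₂.br b a c))) ∧
    ∃ P : R →ₗ[k] R →ₗ[k] R,
      (∀ x y z : R, P x (y * z) = y * P x z + P x y * z) ∧
      (∀ x y z : R, P (x * y) z = x * P y z + y * P x z) ∧
      (∀ a b : A, P (ι (Submodule.Quotient.mk a)) (ι (Submodule.Quotient.mk b))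
        = piTwo ι (D₁.br a b)) ∧
      (∀ a b : A, P (ι (Submodule.Quotient.mk a)) (ι (Submodule.Quotient.mk b))
        = piTwo ι (D₂.br a b)) ∧
      (∀ x y : R, P x y = - P y x) ∧
      (∀ x y z : R, P x (P y z) + P y (P z x) + P z (P x y) = 0) ∧
      (∀ P' : R →ₗ[k] R →ₗ[k] R,
        (∀ x y z : R, P' x (y * z) = y * P' x z + P' x y * z) →
        (∀ x y z : R, P' (x * y) z = x * P' y z + y * P' x z) →
        ((∀ a b : A, P' (ι (Submodule.Quotient.mk a)) (ι (Submodule.Quotient.mk b))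
            = piTwo ι (D₁.br a b)) ∨
         (∀ a b : A, P' (ι (Submodule.Quotient.mk a)) (ι (Submodule.Quotient.mk b))
            = piTwo ι (D₂.br a b))) → P' = P) := by
  classical
  have hanti : ∀ a b : A, D₁.br a b = - swapT k A (D₁.br b a) := D₁.antisymm
  have hcp : ∀ a b c : A,
      jac D₁.br c b a = tau123 k A (tau12 k A (jac D₁.br c a b)) := by
    rcases hwk with h | h
    · exact (d1_iff_cp D₁.br).mp h
    · exact (d2_iff_cp D₁.br D₂.br hbr hanti).mp h
  have hD1 : ∀ a b c : A, jac D₁.br a b c = tau12 k A (jac D₁.br c b a) :=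
    (d1_iff_cp D₁.br).mpr hcp
  have hD2 : ∀ a b c : A, jac D₂.br a b c = tau12 k A (jac D₂.br b a c) :=
    (d2_iff_cp D₁.br D₂.br hbr hanti).mpr hcp
  refine ⟨⟨hD1, hD2⟩, ?_⟩
  -- abbreviations
  have hswapbr : ∀ x y : A, swapT k A (D₁.br x y) = - D₁.br y x := by
    intro x y; rw [hanti x y]; simp
  have hPiTwoEq : ∀ a b : A, piTwo ι (D₂.br a b) = piTwo ι (D₁.br a b) := by
    intro a b; rw [hbr a b, piTwo_swapT]
  have hbr2cyc : ∀ a u v : A,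
      piTwo ι (D₁.br a (u * v)) = piTwo ι (D₁.br a (v * u)) := by
    intro a u v
    rw [D₁.leibniz_right a u v, D₁.leibniz_right a v u, hL, hL, hL, hL]
    rw [show ((1 : A) ⊗ₜ[k] (1 : A)) = (1 : A ⊗[k] A) from rfl]
    simp only [mul_one, one_mul, map_add]
    rw [piTwo_mul_left_one ι u (D₁.br a v), piTwo_mul_left_one ι v (D₁.br a u)]
    exact add_comm _ _
  have bAnti : ∀ a b : A, piTwo ι (D₁.br a b) = - piTwo ι (D₁.br b a) := by
    intro a b; rw [hanti a b, map_neg, piTwo_swapT]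
  have hker2 : ∀ (a : A), ∀ c ∈ commSpan k A, piTwo ι (D₁.br a c) = 0 := by
    intro a c hc
    induction hc using Submodule.span_induction with
    | mem x hx =>
        obtain ⟨u, v, rfl⟩ := hx
        rw [map_sub, map_sub, hbr2cyc a u v, sub_self]
    | zero => simp
    | add x y _ _ hx hy => rw [map_add, map_add, hx, hy, add_zero]
    | smul c x _ hx => rw [map_smul, map_smul, hx, smul_zero]
  have hker1 : ∀ c ∈ commSpan k A, ∀ b : A, piTwo ι (D₁.br c b) = 0 := by
    intro c hc b; rw [bAnti, hker2 b c hc, neg_zero]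
  -- the induced bilinear form on the quotient
  have hBb : ∃ Bb : (A ⧸ commSpan k A) →ₗ[k] (A ⧸ commSpan k A) →ₗ[k] R,
      ∀ a b : A, Bb (Submodule.Quotient.mk a) (Submodule.Quotient.mk b)
        = piTwo ι (D₁.br a b) := by
    have hk2 : commSpan k A ≤ LinearMap.ker (D₁.br.compr₂ (piTwo ι)).flip := by
      intro c hc
      rw [LinearMap.mem_ker]
      ext a
      simp only [LinearMap.flip_apply, LinearMap.compr₂_apply, LinearMap.zero_apply]
      exact hker2 a c hc
    have hk1 : commSpan k A ≤ LinearMap.ker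
        ((Submodule.liftQ _ (D₁.br.compr₂ (piTwo ι)).flip hk2).flip) := by
      intro c hc
      rw [LinearMap.mem_ker]
      apply LinearMap.ext
      intro w
      obtain ⟨b, rfl⟩ := Submodule.Quotient.mk_surjective _ w
      simp only [LinearMap.flip_apply, Submodule.liftQ_apply, LinearMap.compr₂_apply,
        LinearMap.zero_apply]
      exact hker1 c hc b
    refine ⟨Submodule.liftQ _ ((Submodule.liftQ _ (D₁.br.compr₂ (piTwo ι)).flip hk2).flip)
      hk1, ?_⟩
    intro a b
    simp only [Submodule.liftQ_apply, LinearMap.flip_apply, LinearMap.compr₂_apply]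
  obtain ⟨Bb, hBbmk⟩ := hBb
  have hBbAnti : ∀ v w, Bb v w = - Bb w v := by
    intro v w
    obtain ⟨a, rfl⟩ := Submodule.Quotient.mk_surjective _ v
    obtain ⟨b, rfl⟩ := Submodule.Quotient.mk_surjective _ w
    rw [hBbmk, hBbmk, bAnti]
  -- algebra homs from R fixing ι pointwise are the identity
  have idspec : ∀ (g : R →ₐ[k] R), (∀ q, g (ι q) = ι q) → ∀ r, g r = r := by
    intro g hg r
    obtain ⟨g0, _, huniq⟩ := hUniv R ι
    rw [huniq g hg, ← huniq (AlgHom.id k R) (fun q => rfl)]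
    rfl
  -- R is generated by the image of ι
  have hadj : Algebra.adjoin k (Set.range ι) = ⊤ := by
    obtain ⟨gT, hgT, _⟩ := hUniv (Algebra.adjoin k (Set.range ι))
      (LinearMap.codRestrict (Subalgebra.toSubmodule (Algebra.adjoin k (Set.range ι))) ι
        (fun v => Algebra.subset_adjoin ⟨v, rfl⟩))
    have hval : ∀ r : R, ((Algebra.adjoin k (Set.range ι)).val.comp gT) r = r :=
      idspec _ (fun q => by
        rw [AlgHom.comp_apply, hgT q]
        rfl)
    rw [eq_top_iff]
    intro r _
    have := (gT r).2
    rwa [show ((gT r : R)) = r from hval r] at this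
  -- derivations vanishing on the image of ι vanish
  have derivZero : ∀ (L : R →ₗ[k] R), (∀ x y : R, L (x * y) = x * L y + y * L x) →
      (∀ v, L (ι v) = 0) → ∀ r, L r = 0 := by
    intro L hd h0 r
    have hone : L 1 = 0 := by
      have h := hd 1 1
      simp only [one_mul] at h
      exact left_eq_add.mp h
    have hr : r ∈ Algebra.adjoin k (Set.range ι) := by rw [hadj]; trivial
    induction hr using Algebra.adjoin_induction with
    | mem x hx => obtain ⟨v, rfl⟩ := hx; exact h0 v
    | algebraMap r => rw [Algebra.algebraMap_eq_smul_one, map_smul, hone, smul_zero]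
    | add x y _ _ hx hy => rw [map_add, hx, hy, add_zero]
    | mul x y _ _ hx hy => rw [hd x y, hx, hy, mul_zero, mul_zero, add_zero]
  -- construct the Poisson bracket via a polynomial model
  have hP : ∃ P : R →ₗ[k] R →ₗ[k] R,
      (∀ x y z : R, P x (y * z) = y * P x z + P x y * z) ∧
      (∀ x y z : R, P (x * y) z = x * P y z + y * P x z) ∧
      (∀ v w, P (ι v) (ι w) = Bb v w) := by
    set bV : Module.Basis (Module.Basis.ofVectorSpaceIndex k (A ⧸ commSpan k A)) k (A ⧸ commSpan k A) :=
      Module.Basis.ofVectorSpace k (A ⧸ commSpan k A) with hbV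
    obtain ⟨h, hh, _⟩ := hUniv (MvPolynomial (Module.Basis.ofVectorSpaceIndex k (A ⧸ commSpan k A)) k)
      (bV.constr k (fun i => MvPolynomial.X i))
    set e : MvPolynomial (Module.Basis.ofVectorSpaceIndex k (A ⧸ commSpan k A)) k →ₐ[k] R :=
      MvPolynomial.aeval (fun i => ι (bV i)) with he
    have heX : ∀ i, e (MvPolynomial.X i) = ι (bV i) := fun i => by
      rw [he]; exact MvPolynomial.aeval_X _ i
    have heconstr : ∀ v, e ((bV.constr k fun i => MvPolynomial.X i) v) = ι v := by
      intro v
      have hmaps : (e.toLinearMap ∘ₗ (bV.constr k fun i => MvPolynomial.X i)) = ι :=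
        bV.ext fun i => by
          simp only [LinearMap.comp_apply, AlgHom.toLinearMap_apply, Module.Basis.constr_basis]
          exact heX i
      exact LinearMap.congr_fun hmaps v
    have eh : ∀ r : R, e (h r) = r :=
      idspec (e.comp h) (fun q => by rw [AlgHom.comp_apply, hh, heconstr])
    set Ψ := MvPolynomial.mkDerivation k
        (fun i => MvPolynomial.mkDerivation k (fun j => h (Bb (bV i) (bV j)))) with hΨ
    have Pd2' : ∀ x y z : R, e (Ψ (h x) (h (y * z)))
        = y * e (Ψ (h x) (h z)) + e (Ψ (h x) (h y)) * z := by
      intro x y z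
      rw [map_mul h, Derivation.leibniz (Ψ (h x)), map_add, smul_eq_mul, smul_eq_mul,
        map_mul, map_mul, eh, eh]
      ring
    have Pd1' : ∀ x y z : R, e (Ψ (h (x * y)) (h z))
        = x * e (Ψ (h y) (h z)) + y * e (Ψ (h x) (h z)) := by
      intro x y z
      rw [map_mul h, Derivation.leibniz Ψ, Derivation.add_apply, Derivation.smul_apply,
        Derivation.smul_apply, map_add, smul_eq_mul, smul_eq_mul, map_mul, map_mul, eh, eh]
    have hΦ : ∃ Φ : (A ⧸ commSpan k A) →ₗ[k] (A ⧸ commSpan k A) →ₗ[k] R,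
        ∀ v w, Φ v w = e (Ψ (h (ι v)) (h (ι w))) := by
      refine ⟨LinearMap.mk₂ k (fun v w => e (Ψ (h (ι v)) (h (ι w))))
        (fun v v' w => by rw [map_add ι, map_add h, map_add Ψ,
          Derivation.add_apply, map_add])
        (fun c v w => by rw [map_smul ι, map_smul h, Ψ.map_smul,
          Derivation.smul_apply, map_smul])
        (fun v w w' => by rw [map_add ι, map_add h, map_add (Ψ (h (ι v))),
          map_add])
        (fun c v w => by rw [map_smul ι, map_smul h,
          (Ψ (h (ι v))).map_smul, map_smul]), fun v w => rfl⟩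
    obtain ⟨Φ, hΦapp⟩ := hΦ
    have hext : Φ = Bb := by
      refine bV.ext fun i => bV.ext fun j => ?_
      rw [hΦapp, hh, hh, Module.Basis.constr_basis, Module.Basis.constr_basis, hΨ,
        MvPolynomial.mkDerivation_X (R := k) _ i,
        MvPolynomial.mkDerivation_X (R := k) _ j, eh]
    have key2 : ∀ v w, e (Ψ (h (ι v)) (h (ι w))) = Bb v w := by
      intro v w
      rw [← hΦapp, hext]
    refine ⟨LinearMap.mk₂ k (fun x y => e (Ψ (h x) (h y)))
      (fun x x' y => by rw [map_add h, map_add Ψ, Derivation.add_apply, map_add])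
      (fun c x y => by rw [map_smul h, Ψ.map_smul, Derivation.smul_apply,
        map_smul])
      (fun x y y' => by rw [map_add h, map_add (Ψ (h x)), map_add])
      (fun c x y => by rw [map_smul h, (Ψ (h x)).map_smul, map_smul]),
      ?_, ?_, ?_⟩
    · intro x y z
      simpa only [LinearMap.mk₂_apply] using Pd2' x y z
    · intro x y z
      simpa only [LinearMap.mk₂_apply] using Pd1' x y z
    · intro v w
      simpa only [LinearMap.mk₂_apply] using key2 v w
  obtain ⟨P, Pd2, Pd1, Pgen⟩ := hP
  have PgenA : ∀ a b : A, P (ι (Submodule.Quotient.mk a)) (ι (Submodule.Quotient.mk b))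
      = piTwo ι (D₁.br a b) := by
    intro a b; rw [Pgen, hBbmk]
  have PgenA2 : ∀ a b : A, P (ι (Submodule.Quotient.mk a)) (ι (Submodule.Quotient.mk b))
      = piTwo ι (D₂.br a b) := by
    intro a b; rw [PgenA, hPiTwoEq]
  -- antisymmetry
  have Panti : ∀ x y : R, P x y = - P y x := by
    have st1 : ∀ v y, (P + P.flip) (ι v) y = 0 := by
      intro v
      refine derivZero ((P + P.flip) (ι v)) ?_ ?_
      · intro y z
        simp only [LinearMap.add_apply, LinearMap.flip_apply]
        rw [Pd2, Pd1]
        ring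
      · intro w
        simp only [LinearMap.add_apply, LinearMap.flip_apply]
        rw [Pgen, Pgen, hBbAnti v w]
        ring
    have st2 : ∀ y x, ((P + P.flip).flip y) x = 0 := by
      intro y
      refine derivZero ((P + P.flip).flip y) ?_ ?_
      · intro x x'
        simp only [LinearMap.flip_apply, LinearMap.add_apply]
        rw [Pd1, Pd2]
        ring
      · intro v
        simp only [LinearMap.flip_apply]
        exact st1 v y
    intro x y
    have := st2 y x
    simp only [LinearMap.flip_apply, LinearMap.add_apply] at this
    linear_combination this
  -- the key computation on generators
  have KL : ∀ (a : A) (d : A ⊗[k] A), P (ι (Submodule.Quotient.mk a)) (piTwo ι d)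
      = piThree ι (trL D₁.br a d) + piThree ι (trL D₁.br a (swapT k A d)) := by
    intro a d
    induction d using TensorProduct.induction_on with
    | zero => simp
    | tmul u v =>
        rw [piTwo_tmul, Pd2, PgenA, PgenA, swapT_tmul, trL_tmul, trL_tmul,
          piThree_tmul, piThree_tmul]
        ring
    | add p q hp hq =>
        rw [map_add, map_add (P _), hp, hq, map_add (trL D₁.br a), map_add,
          map_add (swapT k A), map_add (trL D₁.br a), map_add]
        ring
  have Jgen : ∀ v w u, P (ι v) (P (ι w) (ι u)) + P (ι w) (P (ι u) (ι v))
      + P (ι u) (P (ι v) (ι w)) = 0 := by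
    have JgenA : ∀ a b c : A,
        P (ι (Submodule.Quotient.mk a)) (P (ι (Submodule.Quotient.mk b)) (ι (Submodule.Quotient.mk c)))
        + P (ι (Submodule.Quotient.mk b)) (P (ι (Submodule.Quotient.mk c)) (ι (Submodule.Quotient.mk a)))
        + P (ι (Submodule.Quotient.mk c)) (P (ι (Submodule.Quotient.mk a)) (ι (Submodule.Quotient.mk b))) = 0 := by
      intro a b c
      rw [PgenA b c, PgenA c a, PgenA a b, KL a, KL b, KL c]
      rw [hswapbr b c, hswapbr c a, hswapbr a b]
      simp only [map_neg]
      have expand : ∀ x y z : A, piThree ι (jac D₁.br x y z)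
          = piThree ι (trL D₁.br x (D₁.br y z)) + piThree ι (trL D₁.br y (D₁.br z x))
            + piThree ι (trL D₁.br z (D₁.br x y)) := by
        intro x y z
        simp only [jac, map_add, piThree_tau123, piThree_tau132]
      have sym12 : ∀ x y z : A,
          piThree ι (jac D₁.br x y z) = piThree ι (jac D₁.br y x z) := by
        intro x y z
        rw [hD1 x y z, piThree_tau12, jac_cyclic D₁.br z y x, piThree_tau123]
      have cyc : ∀ x y z : A,
          piThree ι (jac D₁.br x y z) = piThree ι (jac D₁.br y z x) := by
        intro x y z
        rw [jac_cyclic D₁.br x y z, piThree_tau123]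
      have hfin : piThree ι (jac D₁.br a b c) = piThree ι (jac D₁.br a c b) := by
        rw [cyc a b c, cyc b c a, sym12 c a b]
      rw [expand, expand] at hfin
      linear_combination hfin
    intro v w u
    obtain ⟨a, rfl⟩ := Submodule.Quotient.mk_surjective _ v
    obtain ⟨b, rfl⟩ := Submodule.Quotient.mk_surjective _ w
    obtain ⟨c, rfl⟩ := Submodule.Quotient.mk_surjective _ u
    exact JgenA a b c
  -- Leibniz for the Jacobiator in the first slot
  have hJd : ∀ x x' y z : R,
      P (x * x') (P y z) + P y (P z (x * x')) + P z (P (x * x') y)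
      = x * (P x' (P y z) + P y (P z x') + P z (P x' y))
        + x' * (P x (P y z) + P y (P z x) + P z (P x y)) := by
    intro x x' y z
    rw [Pd1 x x' (P y z), Pd2 z x x', map_add (P y), Pd2 y x (P z x'), Pd2 y (P z x) x',
      Pd1 x x' y, map_add (P z), Pd2 z x (P x' y), Pd2 z x' (P x y)]
    linear_combination (P z x) * Panti x' y + (P z x') * Panti x y
  -- Jacobi identity
  have hJac : ∀ x y z : R, P x (P y z) + P y (P z x) + P z (P x y) = 0 := by
    have st1 : ∀ v w z, P (ι v) (P (ι w) z) + P (ι w) (P z (ι v)) + P z (P (ι v) (ι w)) = 0 := by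
      intro v w
      have hz := derivZero ((P (ι v)) ∘ₗ (P (ι w)) + (P (ι w)) ∘ₗ (P.flip (ι v))
          + P.flip (P (ι v) (ι w))) ?_ ?_
      · intro z
        have := hz z
        simpa only [LinearMap.add_apply, LinearMap.comp_apply, LinearMap.flip_apply] using this
      · intro z z'
        simp only [LinearMap.add_apply, LinearMap.comp_apply, LinearMap.flip_apply]
        linear_combination hJd z z' (ι v) (ι w)
      · intro u
        simp only [LinearMap.add_apply, LinearMap.comp_apply, LinearMap.flip_apply]
        linear_combination Jgen v w u
    have st2 : ∀ v y z, P (ι v) (P y z) + P y (P z (ι v)) + P z (P (ι v) y) = 0 := by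
      intro v y z
      have hz := derivZero ((P (ι v)) ∘ₗ (P.flip z) + P.flip (P z (ι v))
          + (P z) ∘ₗ (P (ι v))) ?_ ?_
      · have := hz y
        simpa only [LinearMap.add_apply, LinearMap.comp_apply, LinearMap.flip_apply] using this
      · intro y y'
        simp only [LinearMap.add_apply, LinearMap.comp_apply, LinearMap.flip_apply]
        linear_combination hJd y y' z (ι v)
      · intro w
        simp only [LinearMap.add_apply, LinearMap.comp_apply, LinearMap.flip_apply]
        linear_combination st1 v w z
    intro x y z
    have hz := derivZero (P.flip (P y z) + (P y) ∘ₗ (P z) + (P z) ∘ₗ (P.flip y)) ?_ ?_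
    · have := hz x
      simpa only [LinearMap.add_apply, LinearMap.comp_apply, LinearMap.flip_apply] using this
    · intro x x'
      simp only [LinearMap.add_apply, LinearMap.comp_apply, LinearMap.flip_apply]
      linear_combination hJd x x' y z
    · intro v
      simp only [LinearMap.add_apply, LinearMap.comp_apply, LinearMap.flip_apply]
      linear_combination st2 v y z
  refine ⟨P, Pd2, Pd1, PgenA, PgenA2, Panti, hJac, ?_⟩
  -- uniqueness
  intro P' hP'2 hP'1 hgenOr
  have hgq : ∀ v w, P' (ι v) (ι w) = P (ι v) (ι w) := by
    intro v w
    obtain ⟨a, rfl⟩ := Submodule.Quotient.mk_surjective _ v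
    obtain ⟨b, rfl⟩ := Submodule.Quotient.mk_surjective _ w
    rcases hgenOr with hg | hg
    · rw [hg, PgenA]
    · rw [hg, PgenA2]
  have st1 : ∀ v y, (P' - P) (ι v) y = 0 := by
    intro v
    refine derivZero ((P' - P) (ι v)) ?_ ?_
    · intro y z
      simp only [LinearMap.sub_apply]
      rw [hP'2, Pd2]
      ring
    · intro w
      simp only [LinearMap.sub_apply]
      rw [hgq]
      ring
  have st2 : ∀ y x, ((P' - P).flip y) x = 0 := by
    intro y
    refine derivZero ((P' - P).flip y) ?_ ?_
    · intro x x'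
      simp only [LinearMap.flip_apply, LinearMap.sub_apply]
      rw [hP'1, Pd1]
      ring
    · intro v
      simp only [LinearMap.flip_apply]
      exact st1 v y
  refine LinearMap.ext fun x => LinearMap.ext fun y => ?_
  have := st2 y x
  simp only [LinearMap.flip_apply, LinearMap.sub_apply] at this
  linear_combination this
end
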